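/- arXiv:1805.01635 — 6 statements merged into one kernel-verified Lean document; each statement's English description precedes it below -/
import Mathlib

section
/- Any topological space with a complete sequence of countable disjoint F_σ covers is an F_{σδ} set in every compactification. -/
universe u

open Topology

/-- A compactification of `X`: a compact Hausdorff space together with a
homeomorphic embedding of `X` onto a dense subspace. -/
structure Compactification (X : Type u) [TopologicalSpace X] : Type (u + 1) where
  space : Type u
  [ts : TopologicalSpace space]
  [compact : CompactSpace space]
  [t2 : T2Space space]
  emb : X → space
  isEmbedding : IsEmbedding emb
  dense : DenseRange emb

attribute [instance] Compactification.ts Compactification.compact Compactification.t2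

/-- A set is `F_σ` if it is a countable union of closed sets. -/
def IsFsigma {Y : Type*} [TopologicalSpace Y] (s : Set Y) : Prop :=
  ∃ F : ℕ → Set Y, (∀ n, IsClosed (F n)) ∧ s = ⋃ n, F n

set_option linter.unusedSectionVars false

namespace FsdAux

open Set Filter Topology


lemma isFsigma_univ {Y : Type*} [TopologicalSpace Y] : IsFsigma (Set.univ : Set Y) :=
  ⟨fun _ => Set.univ, fun _ => isClosed_univ, (Set.iUnion_const _).symm⟩

lemma isFsigma_empty {Y : Type*} [TopologicalSpace Y] : IsFsigma (∅ : Set Y) :=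
  ⟨fun _ => ∅, fun _ => isClosed_empty, (Set.iUnion_empty).symm⟩

lemma isFsigma_iUnion_closed {Y : Type*} [TopologicalSpace Y] {ι : Type*} [Countable ι]
    (f : ι → Set Y) (hf : ∀ i, IsClosed (f i)) : IsFsigma (⋃ i, f i) := by
  cases isEmpty_or_nonempty ι with
  | inl h => simpa [Set.iUnion_of_empty] using isFsigma_empty (Y := Y)
  | inr h =>
    obtain ⟨g, hg⟩ := exists_surjective_nat ι
    exact ⟨fun n => f (g n), fun n => hf _, (hg.iUnion_comp f).symm⟩

variable {X K : Type u} [TopologicalSpace X] [TopologicalSpace K]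

lemma exact_trace {e : X → K} (he : IsEmbedding e) {C : Set X} (hC : IsClosed C)
    {x : X} (hx : e x ∈ closure (e '' C)) : x ∈ C := by
  have h : x ∈ closure C := by
    rw [he.closure_eq_preimage_closure_image]; exact hx
  rwa [hC.closure_eq] at h

lemma cluster_eq [T2Space K] {e : X → K} (he : IsEmbedding e) {y : K} {F : Filter X}
    (hle : F ≤ comap e (𝓝 y)) {x : X} (hx : ClusterPt x F) : e x = y := by
  have h1 : ClusterPt (e x) (map e F) := hx.map he.continuous.continuousAt tendsto_map
  have h2 : map e F ≤ 𝓝 y := le_trans (map_mono hle) map_comap_le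
  have h3 : ClusterPt (e x) (𝓝 y) := h1.mono h2
  exact eq_of_nhds_neBot h3

lemma dagger [CompactSpace K] [T2Space K] {e : X → K} (he : IsEmbedding e)
    (𝒟 : ℕ → Set (Set X))
    (hcomplete : ∀ F : Filter X, F.NeBot → (∀ n, ∃ S ∈ 𝒟 n, S ∈ F) → ∃ x : X, ClusterPt x F)
    (σ : ℕ → Set X) (hσ : ∀ i, σ i ∈ 𝒟 i)
    {y : K} (hy : ∀ n, y ∈ closure (e '' (⋂ i, ⋂ (_ : i ≤ n), σ i))) :
    y ∈ range e := by
  set En : ℕ → Set X := fun n => ⋂ i, ⋂ (_ : i ≤ n), σ i with hEn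
  have hmono : Directed (· ≥ ·) En := by
    intro a b
    refine ⟨max a b, ?_, ?_⟩ <;> intro z hz <;> rw [hEn, mem_iInter₂] at * <;>
      intro i hi <;> exact hz i (le_trans hi (by omega))
  set F : Filter X := comap e (𝓝 y) ⊓ ⨅ n, 𝓟 (En n) with hF
  have hbasis : F.HasBasis (fun p : Set K × ℕ => p.1 ∈ 𝓝 y ∧ True)
      (fun p => e ⁻¹' p.1 ∩ En p.2) :=
    ((𝓝 y).basis_sets.comap e).inf (hasBasis_iInf_principal hmono)
  have hne : F.NeBot := by
    rw [hbasis.neBot_iff]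
    rintro ⟨U, n⟩ ⟨hU, -⟩
    obtain ⟨z, hzU, x, hxE, rfl⟩ := (mem_closure_iff_nhds.mp (hy n)) U hU
    exact ⟨x, hzU, hxE⟩
  have hmeets : ∀ n, ∃ S ∈ 𝒟 n, S ∈ F := by
    intro n
    refine ⟨σ n, hσ n, ?_⟩
    have h1 : En n ∈ F := mem_inf_of_right (mem_iInf_of_mem n (mem_principal_self _))
    exact mem_of_superset h1 (by intro z hz; rw [hEn, mem_iInter₂] at hz; exact hz n le_rfl)
  obtain ⟨x, hx⟩ := hcomplete F hne hmeets
  exact ⟨x, cluster_eq he inf_le_left hx⟩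



variable {X K : Type u} [TopologicalSpace X] [TopologicalSpace K]

/-- A cell of level `n`: a choice of a member of `𝒟 i` for each `i ≤ n`. -/
def Cell (𝒟 : ℕ → Set (Set X)) (n : ℕ) : Type u :=
  {s : Fin (n+1) → Set X // ∀ i : Fin (n+1), s i ∈ 𝒟 i.val}

/-- A node: a cell together with indices of closed pieces. -/
def Node (𝒟 : ℕ → Set (Set X)) (n : ℕ) : Type u :=
  Cell 𝒟 n × (Fin (n+1) → ℕ)

lemma cell_countable {𝒟 : ℕ → Set (Set X)} (hcount : ∀ n, (𝒟 n).Countable) (n : ℕ) :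
    Countable (Cell 𝒟 n) := by
  haveI : ∀ j : ℕ, Countable (𝒟 j) := fun j => (hcount j).to_subtype
  have hinj : Function.Injective
      (fun s : Cell 𝒟 n => (fun i => (⟨s.1 i, s.2 i⟩ : 𝒟 i.val)) :
        Cell 𝒟 n → ∀ i : Fin (n+1), 𝒟 i.val) := by
    intro a b h
    apply Subtype.ext; funext i
    exact congrArg Subtype.val (congrFun h i)
  exact hinj.countable

lemma node_countable {𝒟 : ℕ → Set (Set X)} (hcount : ∀ n, (𝒟 n).Countable) (n : ℕ) :
    Countable (Node 𝒟 n) := by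
  haveI := cell_countable hcount n
  exact instCountableProd

/-- The set of the cell. -/
def cellSet {𝒟 : ℕ → Set (Set X)} {n : ℕ} (s : Cell 𝒟 n) : Set X := ⋂ i, s.1 i

/-- The closed set of a node. -/
def nodeSet (Fp : ℕ → Set X → ℕ → Set X) {𝒟 : ℕ → Set (Set X)} {n : ℕ}
    (ν : Node 𝒟 n) : Set X := ⋂ i, Fp i.val (ν.1.1 i) (ν.2 i)

/-- Closure in the compactification of a node's image. -/
def nodeCl (e : X → K) (Fp : ℕ → Set X → ℕ → Set X) {𝒟 : ℕ → Set (Set X)} {n : ℕ}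
    (ν : Node 𝒟 n) : Set K := closure (e '' nodeSet Fp ν)

def plainFac (e : X → K) (Fp : ℕ → Set X → ℕ → Set X) (𝒟 : ℕ → Set (Set X)) (n : ℕ) :
    Set K := ⋃ ν : Node 𝒟 n, nodeCl e Fp ν

open scoped Classical in
noncomputable def pairFac (e : X → K) (Fp : ℕ → Set X → ℕ → Set X) {𝒟 : ℕ → Set (Set X)}
    {n : ℕ} (ν μ : Node 𝒟 n) : Set K :=
  if ν.1 = μ.1 then univ else
    ⋃ (p : Σ k, Cell 𝒟 k)
      (_ : closure (e '' cellSet p.2) ∩ (nodeCl e Fp ν ∩ nodeCl e Fp μ) = ∅),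
      closure (e '' cellSet p.2)

def FacIdx (𝒟 : ℕ → Set (Set X)) : Type u := Σ n : ℕ, Option (Node 𝒟 n × Node 𝒟 n)

noncomputable def fac (e : X → K) (Fp : ℕ → Set X → ℕ → Set X) (𝒟 : ℕ → Set (Set X)) :
    FacIdx 𝒟 → Set K := fun i =>
  match i with
  | ⟨n, none⟩ => plainFac e Fp 𝒟 n
  | ⟨_, some (ν, μ)⟩ => pairFac e Fp ν μ

lemma facIdx_countable {𝒟 : ℕ → Set (Set X)} (hcount : ∀ n, (𝒟 n).Countable) :
    Countable (FacIdx 𝒟) := by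
  haveI : ∀ n, Countable (Node 𝒟 n) := fun n => node_countable hcount n
  unfold FacIdx
  infer_instance

lemma fac_isFsigma {𝒟 : ℕ → Set (Set X)} (hcount : ∀ n, (𝒟 n).Countable)
    (e : X → K) (Fp : ℕ → Set X → ℕ → Set X) (i : FacIdx 𝒟) :
    IsFsigma (fac e Fp 𝒟 i) := by
  haveI : ∀ n, Countable (Node 𝒟 n) := fun n => node_countable hcount n
  haveI : ∀ n, Countable (Cell 𝒟 n) := fun n => cell_countable hcount n
  obtain ⟨n, (_ | ⟨ν, μ⟩)⟩ := i
  · exact isFsigma_iUnion_closed _ (fun ν => isClosed_closure)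
  · show IsFsigma (pairFac e Fp ν μ)
    unfold pairFac
    split_ifs
    · exact isFsigma_univ
    · rw [← Set.iUnion_subtype
        (fun p : Σ k, Cell 𝒟 k =>
          closure (e '' cellSet p.2) ∩ (nodeCl e Fp ν ∩ nodeCl e Fp μ) = ∅)
        (fun q => closure (e '' cellSet q.1.2))]
      exact isFsigma_iUnion_closed _ (fun q => isClosed_closure)

/-- Restriction of a cell to the previous level. -/
def cellInit {𝒟 : ℕ → Set (Set X)} {n : ℕ} (s : Cell 𝒟 (n+1)) : Cell 𝒟 n :=
  ⟨Fin.init s.1, fun i => by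
    have h := s.2 i.castSucc
    simpa [Fin.init] using h⟩

lemma nodeSet_subset_init (Fp : ℕ → Set X → ℕ → Set X) {𝒟 : ℕ → Set (Set X)} {n : ℕ}
    (ν : Node 𝒟 (n+1)) :
    nodeSet Fp ν ⊆ nodeSet Fp ((cellInit ν.1, Fin.init ν.2) : Node 𝒟 n) := by
  intro z hz
  rw [nodeSet, mem_iInter] at hz; unfold nodeSet; rw [mem_iInter]
  intro i
  exact hz i.castSucc

lemma nodeCl_subset_init (e : X → K) (Fp : ℕ → Set X → ℕ → Set X) {𝒟 : ℕ → Set (Set X)}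
    {n : ℕ} (ν : Node 𝒟 (n+1)) :
    nodeCl e Fp ν ⊆ nodeCl e Fp ((cellInit ν.1, Fin.init ν.2) : Node 𝒟 n) :=
  closure_mono (image_mono (nodeSet_subset_init Fp ν))

lemma nodeSet_isClosed (Fp : ℕ → Set X → ℕ → Set X) {𝒟 : ℕ → Set (Set X)}
    (hFpcl : ∀ i S, S ∈ 𝒟 i → ∀ k, IsClosed (Fp i S k)) {n : ℕ} (ν : Node 𝒟 n) :
    IsClosed (nodeSet Fp ν) :=
  isClosed_iInter fun i => hFpcl i.val _ (ν.1.2 i) _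

lemma nodeSet_subset_cellSet (Fp : ℕ → Set X → ℕ → Set X) {𝒟 : ℕ → Set (Set X)}
    (hFpsub : ∀ i S, S ∈ 𝒟 i → ∀ k, Fp i S k ⊆ S) {n : ℕ} (ν : Node 𝒟 n) :
    nodeSet Fp ν ⊆ cellSet ν.1 := by
  intro z hz
  rw [nodeSet, mem_iInter] at hz
  rw [cellSet, mem_iInter]
  exact fun i => hFpsub i.val _ (ν.1.2 i) _ (hz i)

lemma nodeSet_subset_piece (Fp : ℕ → Set X → ℕ → Set X) {𝒟 : ℕ → Set (Set X)}
    (hFpsub : ∀ i S, S ∈ 𝒟 i → ∀ k, Fp i S k ⊆ S) {n : ℕ} (ν : Node 𝒟 n)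
    (i : Fin (n+1)) : nodeSet Fp ν ⊆ ν.1.1 i := by
  intro z hz
  rw [nodeSet, mem_iInter] at hz
  exact hFpsub i.val _ (ν.1.2 i) _ (hz i)

lemma cellSet_eq_biInter {𝒟 : ℕ → Set (Set X)} {n : ℕ} (s : Cell 𝒟 n) (g : ℕ → Set X)
    (hg : ∀ i : Fin (n+1), s.1 i = g i.val) :
    cellSet s = ⋂ i, ⋂ (_ : i ≤ n), g i := by
  ext z
  rw [cellSet, mem_iInter, mem_iInter₂]
  constructor
  · intro h i hi
    have := h ⟨i, by omega⟩
    rwa [hg ⟨i, by omega⟩] at this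
  · intro h i
    rw [hg i]
    exact h i.val (by omega)

theorem main {X K : Type u} [TopologicalSpace X] [TopologicalSpace K]
    [CompactSpace K] [T2Space K]
    (e : X → K) (he : IsEmbedding e)
    (𝒟 : ℕ → Set (Set X))
    (hcount : ∀ n, (𝒟 n).Countable)
    (hdisj : ∀ n, ∀ s ∈ 𝒟 n, ∀ t ∈ 𝒟 n, s ≠ t → Disjoint s t)
    (hFsig : ∀ n, ∀ s ∈ 𝒟 n, IsFsigma s)
    (hcov : ∀ n, ⋃₀ 𝒟 n = Set.univ)
    (hcomplete : ∀ F : Filter X, F.NeBot → (∀ n, ∃ S ∈ 𝒟 n, S ∈ F) →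
      ∃ x : X, ClusterPt x F) :
    ∃ G : ℕ → Set K, (∀ n, IsFsigma (G n)) ∧ Set.range e = ⋂ n, G n := by
  classical
  cases isEmpty_or_nonempty X with
  | inl hX =>
      refine ⟨fun _ => ∅, fun _ => isFsigma_empty, ?_⟩
      rw [Set.range_eq_empty]
      exact (Set.iInter_const ∅).symm
  | inr hX =>
  -- choose closed pieces of the F_sigma members
  have hFpexists : ∀ (i : ℕ) (S : Set X), ∃ Fp : ℕ → Set X,
      S ∈ 𝒟 i → (∀ k, IsClosed (Fp k)) ∧ S = ⋃ k, Fp k := by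
    intro i S
    by_cases h : S ∈ 𝒟 i
    · obtain ⟨Fp, h1, h2⟩ := hFsig i S h
      exact ⟨Fp, fun _ => ⟨h1, h2⟩⟩
    · exact ⟨fun _ => ∅, fun h' => absurd h' h⟩
  choose Fp hFpspec using hFpexists
  have hFpcl : ∀ i S, S ∈ 𝒟 i → ∀ k, IsClosed (Fp i S k) := fun i S h => (hFpspec i S h).1
  have hFpsub : ∀ i S, S ∈ 𝒟 i → ∀ k, Fp i S k ⊆ S := by
    intro i S h k
    conv_rhs => rw [(hFpspec i S h).2]
    exact subset_iUnion _ k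
  have hFpmem : ∀ i S, S ∈ 𝒟 i → ∀ x ∈ S, ∃ k, x ∈ Fp i S k := by
    intro i S h x hx
    rw [(hFpspec i S h).2] at hx
    exact mem_iUnion.mp hx
  -- itineraries
  have hit : ∀ (x : X) (i : ℕ), ∃ S, S ∈ 𝒟 i ∧ x ∈ S := by
    intro x i
    obtain ⟨S, h1, h2⟩ := (sUnion_eq_univ_iff.mp (hcov i)) x
    exact ⟨S, h1, h2⟩
  choose itin hitinmem hitinx using hit
  choose mfun hmfun using fun (x : X) (i : ℕ) =>
    hFpmem i (itin x i) (hitinmem x i) x (hitinx x i)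
  let xcell : X → ∀ n, Cell 𝒟 n := fun x n =>
    ⟨fun i => itin x i.val, fun i => hitinmem x i.val⟩
  let xnode : X → ∀ n, Node 𝒟 n := fun x n => (xcell x n, fun i => mfun x i.val)
  have hxnode : ∀ x n, x ∈ nodeSet (𝒟 := 𝒟) Fp (xnode x n) := by
    intro x n
    rw [nodeSet, mem_iInter]
    intro i
    exact hmfun x i.val
  have hxcell : ∀ x n, x ∈ cellSet (xcell x n) := fun x n =>
    nodeSet_subset_cellSet Fp hFpsub (xnode x n) (hxnode x n)
  -- a point of K lying in all closures along an itinerary is in the range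
  have hdag : ∀ (x : X) {y : K},
      (∀ n, y ∈ closure (e '' cellSet (xcell x n))) → y ∈ range e := by
    intro x y hy
    refine dagger he 𝒟 hcomplete (fun i => itin x i) (fun i => hitinmem x i) ?_
    intro n
    have h := hy n
    rwa [cellSet_eq_biInter (xcell x n) (fun i => itin x i) (fun i => rfl)] at h
  -- the intersection of two node closures with distinct cells misses the range
  have hZrange : ∀ {n : ℕ} (ν μ : Node 𝒟 n), ν.1 ≠ μ.1 →
      ∀ w : X, e w ∉ nodeCl e Fp ν ∩ nodeCl e Fp μ := by
    intro n ν μ hne w hw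
    have h1 : w ∈ nodeSet Fp ν := exact_trace he (nodeSet_isClosed Fp hFpcl ν) hw.1
    have h2 : w ∈ nodeSet Fp μ := exact_trace he (nodeSet_isClosed Fp hFpcl μ) hw.2
    have hex : ∃ i : Fin (n+1), ν.1.1 i ≠ μ.1.1 i := by
      by_contra h
      push_neg at h
      exact hne (Subtype.ext (funext h))
    obtain ⟨i, hi⟩ := hex
    have hd := hdisj i.val _ (ν.1.2 i) _ (μ.1.2 i) hi
    exact Set.disjoint_left.mp hd (nodeSet_subset_piece Fp hFpsub ν i h1)
      (nodeSet_subset_piece Fp hFpsub μ i h2)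
  -- range is contained in every pair factor
  have hrange_pair : ∀ {n : ℕ} (ν μ : Node 𝒟 n) (x : X), e x ∈ pairFac e Fp ν μ := by
    intro n ν μ x
    rw [pairFac]
    split_ifs with hc
    · trivial
    · set Z : Set K := nodeCl e Fp ν ∩ nodeCl e Fp μ with hZ
      have hZcl : IsClosed Z := isClosed_closure.inter isClosed_closure
      set D : ℕ → Set K := fun N => closure (e '' cellSet (xcell x N)) ∩ Z with hD
      have hDcl : ∀ N, IsClosed (D N) := fun N => isClosed_closure.inter hZcl
      have hDanti : ∀ N, D (N+1) ⊆ D N := by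
        intro N
        apply inter_subset_inter _ (Subset.refl _)
        apply closure_mono
        apply image_mono
        intro z hz
        rw [cellSet, mem_iInter] at hz ⊢
        intro i
        exact hz ⟨i.val, by omega⟩
      have hDempty : (⋂ N, D N) = ∅ := by
        rw [eq_empty_iff_forall_notMem]
        intro z hz
        rw [mem_iInter] at hz
        obtain ⟨w, rfl⟩ := hdag x (fun n => (hz n).1)
        exact hZrange ν μ hc w (hz 0).2
      have hNe : ∃ N, D N = ∅ := by
        by_contra h
        push_neg at h
        have hne := IsCompact.nonempty_iInter_of_sequence_nonempty_isCompact_isClosed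
          D hDanti (fun N => h N) (hDcl 0).isCompact hDcl
        rw [hDempty] at hne
        exact absurd hne (by simp)
      obtain ⟨N, hN⟩ := hNe
      rw [mem_iUnion]
      refine ⟨⟨N, xcell x N⟩, ?_⟩
      rw [mem_iUnion]
      exact ⟨hN, subset_closure (mem_image_of_mem e (hxcell x N))⟩
  have hrange_plain : ∀ (n : ℕ) (x : X), e x ∈ plainFac e Fp 𝒟 n := by
    intro n x
    rw [plainFac, mem_iUnion]
    exact ⟨xnode x n, subset_closure (mem_image_of_mem e (hxnode x n))⟩
  -- converse: a point in all factors is in the range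
  have hrev : ∀ y : K, (∀ i : FacIdx 𝒟, y ∈ fac e Fp 𝒟 i) → y ∈ range e := by
    intro y hy
    let alive : ∀ n, Cell 𝒟 n → Prop :=
      fun n s => ∃ m : Fin (n+1) → ℕ, y ∈ nodeCl e Fp ((s, m) : Node 𝒟 n)
    have hSA : ∀ n (s t : Cell 𝒟 n), alive n s → alive n t → s = t := by
      intro n s t hs ht
      by_contra hne
      obtain ⟨m, hm⟩ := hs
      obtain ⟨m', hm'⟩ := ht
      have hp : y ∈ pairFac e Fp ((s, m) : Node 𝒟 n) ((t, m') : Node 𝒟 n) :=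
        hy ⟨n, some ((s, m), (t, m'))⟩
      unfold pairFac at hp; rw [if_neg hne, mem_iUnion] at hp
      obtain ⟨p, hp⟩ := hp
      rw [mem_iUnion] at hp
      obtain ⟨hcond, hymem⟩ := hp
      have hmem : y ∈ (∅ : Set K) := by
        rw [← hcond]
        exact ⟨hymem, hm, hm'⟩
      exact absurd hmem (notMem_empty y)
    have hSL : ∀ n (s : Cell 𝒟 n), alive n s →
        ∃ s' : Cell 𝒟 (n+1), cellInit s' = s ∧ alive (n+1) s' := by
      intro n s hs
      have hp : y ∈ plainFac e Fp 𝒟 (n+1) := hy ⟨n+1, none⟩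
      rw [plainFac, mem_iUnion] at hp
      obtain ⟨ν', hν'⟩ := hp
      have hinit : alive n (cellInit ν'.1) :=
        ⟨Fin.init ν'.2, nodeCl_subset_init e Fp ν' hν'⟩
      exact ⟨ν'.1, hSA n _ s hinit hs, ⟨ν'.2, hν'⟩⟩
    have hbase : ∃ s : Cell 𝒟 0, alive 0 s := by
      have hp : y ∈ plainFac e Fp 𝒟 0 := hy ⟨0, none⟩
      rw [plainFac, mem_iUnion] at hp
      obtain ⟨ν, hν⟩ := hp
      exact ⟨ν.1, ν.2, hν⟩
    obtain ⟨s0, hs0⟩ := hbase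
    choose nxt hnxt1 hnxt2 using hSL
    let chain : ∀ n, {s : Cell 𝒟 n // alive n s} := fun n =>
      Nat.rec ⟨s0, hs0⟩ (fun n p => ⟨nxt n p.1 p.2, hnxt2 n p.1 p.2⟩) n
    have hchain : ∀ n, cellInit (chain (n+1)).1 = (chain n).1 :=
      fun n => hnxt1 n (chain n).1 (chain n).2
    let σb : ℕ → Set X := fun i => (chain i).1.1 (Fin.last i)
    have hσb : ∀ i, σb i ∈ 𝒟 i := fun i => (chain i).1.2 (Fin.last i)
    have hcoh : ∀ n (i : Fin (n+1)), (chain n).1.1 i = σb i.val := by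
      intro n
      induction n with
      | zero =>
        intro i
        have hi0 : i = Fin.last 0 := Fin.ext (by omega)
        rw [hi0]; rfl
      | succ n ih =>
        intro i
        refine Fin.lastCases ?_ ?_ i
        · rfl
        · intro j
          have h1 : (chain (n+1)).1.1 j.castSucc = (cellInit (chain (n+1)).1).1 j := rfl
          rw [h1, hchain n]
          exact ih j
    have hEn : ∀ n, y ∈ closure (e '' (⋂ i, ⋂ (_ : i ≤ n), σb i)) := by
      intro n
      obtain ⟨m, hm⟩ := (chain n).2
      have hsub : nodeSet Fp (((chain n).1, m) : Node 𝒟 n) ⊆ ⋂ i, ⋂ (_ : i ≤ n), σb i := by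
        rw [← cellSet_eq_biInter (chain n).1 σb (hcoh n)]
        exact nodeSet_subset_cellSet Fp hFpsub _
      exact closure_mono (image_mono hsub) hm
    exact dagger he 𝒟 hcomplete σb hσb hEn
  -- the main set equality over the countable index
  have hmain : Set.range e = ⋂ i : FacIdx 𝒟, fac e Fp 𝒟 i := by
    apply Subset.antisymm
    · rintro z ⟨x, rfl⟩
      rw [mem_iInter]
      intro i
      obtain ⟨n, (_ | ⟨ν, μ⟩)⟩ := i
      · exact hrange_plain n x
      · exact hrange_pair ν μ x
    · intro y hy
      exact hrev y (fun i => mem_iInter.mp hy i)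
  -- re-index over ℕ
  haveI := facIdx_countable (𝒟 := 𝒟) hcount
  obtain ⟨enc, henc⟩ := exists_injective_nat (FacIdx 𝒟)
  refine ⟨fun n => if h : ∃ i, enc i = n then fac e Fp 𝒟 h.choose else univ, ?_, ?_⟩
  · intro n
    by_cases h : ∃ i, enc i = n
    · simp only [dif_pos h]
      exact fac_isFsigma hcount e Fp _
    · simp only [dif_neg h]
      exact isFsigma_univ
  · rw [hmain]
    apply Subset.antisymm
    · intro y hy
      rw [mem_iInter] at hy ⊢
      intro n
      by_cases h : ∃ i, enc i = n
      · simp only [dif_pos h]; exact hy _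
      · simp only [dif_neg h]; trivial
    · intro y hy
      rw [mem_iInter] at hy ⊢
      intro i
      have h := hy (enc i)
      have hex : ∃ j, enc j = enc i := ⟨i, rfl⟩
      simp only [dif_pos hex] at h
      rwa [henc hex.choose_spec] at h

end FsdAux


/-- Any Tychonoff space admitting a complete sequence of countable disjoint
`F_σ` covers is an `F_{σδ}` set (a countable intersection of `F_σ` sets) in
every compactification. -/
theorem fsigmadelta_in_every_compactification {X : Type u} [TopologicalSpace X]
    [T35Space X] (𝒟 : ℕ → Set (Set X))
    (hcount : ∀ n, (𝒟 n).Countable)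
    (hdisj : ∀ n, ∀ s ∈ 𝒟 n, ∀ t ∈ 𝒟 n, s ≠ t → Disjoint s t)
    (hFσ : ∀ n, ∀ s ∈ 𝒟 n, IsFsigma s)
    (hcov : ∀ n, ⋃₀ 𝒟 n = Set.univ)
    (hcomplete : ∀ F : Filter X, F.NeBot → (∀ n, ∃ S ∈ 𝒟 n, S ∈ F) →
      ∃ x : X, ClusterPt x F)
    (c : Compactification X) :
    ∃ G : ℕ → Set c.space, (∀ n, IsFsigma (G n)) ∧ Set.range c.emb = ⋂ n, G n :=
  FsdAux.main c.emb c.isEmbedding 𝒟 hcount hdisj hFσ hcov hcomplete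
end

section
/- Every hereditarily Lindelöf Tychonoff space that is an F_{σδ} subset of some compactification is an F_{σδ} subset of every compactification. -/
universe u

open Topology

lemma isFsigma_iUnion_closed {Y : Type*} [TopologicalSpace Y] {F : ℕ → Set Y}
    (h : ∀ n, IsClosed (F n)) : IsFsigma (⋃ n, F n) := ⟨F, h, rfl⟩

lemma isFsigma_empty {Y : Type*} [TopologicalSpace Y] : IsFsigma (∅ : Set Y) :=
  ⟨fun _ => ∅, fun _ => isClosed_empty, by simp⟩

lemma IsFsigma.union {Y : Type*} [TopologicalSpace Y] {s t : Set Y}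
    (hs : IsFsigma s) (ht : IsFsigma t) : IsFsigma (s ∪ t) := by
  obtain ⟨F, hF, rfl⟩ := hs
  obtain ⟨G, hG, rfl⟩ := ht
  refine ⟨fun n => Sum.elim F G ((Denumerable.eqv (ℕ ⊕ ℕ)).symm n), fun n => ?_, ?_⟩
  · rcases h' : (Denumerable.eqv (ℕ ⊕ ℕ)).symm n with a | b <;> simp [h', hF, hG]
  · rw [(Denumerable.eqv (ℕ ⊕ ℕ)).symm.surjective.iUnion_comp
      (g := fun j => Sum.elim F G j)]
    rw [Set.iUnion_sum]
    simp

/-- A Lindelöf subset of a compact Hausdorff space can be separated from a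
disjoint closed set by an `F_σ` set. -/
lemma exists_fsigma_sep {K : Type u} [TopologicalSpace K] [CompactSpace K] [T2Space K]
    {L C : Set K} (hL : IsLindelof L) (hC : IsClosed C) (hd : ∀ x ∈ L, x ∉ C) :
    ∃ T : Set K, IsFsigma T ∧ L ⊆ T ∧ ∀ x ∈ T, x ∉ C := by
  classical
  have hnb : ∀ x : L, ∃ t, t ∈ 𝓝 (x : K) ∧ IsClosed t ∧ t ⊆ Cᶜ := fun x =>
    exists_mem_nhds_isClosed_subset (hC.isOpen_compl.mem_nhds (hd x x.2))
  choose t ht hcl hsub using hnb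
  have hcov : L ⊆ ⋃ x : L, interior (t x) := fun x hx =>
    Set.mem_iUnion.2 ⟨⟨x, hx⟩, mem_interior_iff_mem_nhds.2 (ht ⟨x, hx⟩)⟩
  obtain ⟨r, hrc, hrcov⟩ :=
    hL.elim_countable_subcover (fun x : L => interior (t x)) (fun _ => isOpen_interior) hcov
  rcases r.eq_empty_or_nonempty with rfl | hne
  · refine ⟨∅, isFsigma_empty, ?_, by simp⟩
    intro x hx
    simpa using hrcov hx
  · obtain ⟨f, hf⟩ := hrc.exists_eq_range hne
    refine ⟨⋃ n, t (f n), ⟨fun n => t (f n), fun n => hcl (f n), rfl⟩, ?_, ?_⟩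
    · intro x hx
      obtain ⟨i, hir, hxi⟩ := Set.mem_iUnion₂.1 (hrcov hx)
      rw [hf] at hir
      obtain ⟨n, rfl⟩ := hir
      exact Set.mem_iUnion.2 ⟨n, interior_subset hxi⟩
    · intro x hx hxC
      obtain ⟨n, hn⟩ := Set.mem_iUnion.1 hx
      exact hsub (f n) hn hxC

/-- A hereditarily Lindelöf Tychonoff space which is an `F_{σδ}` subset
(a countable intersection of `F_σ` sets) of some compactification is an
`F_{σδ}` subset of every compactification. -/
theorem hereditarilyLindelof_absolute_fsigmadelta {X : Type u} [TopologicalSpace X]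
    [T35Space X] [HereditarilyLindelofSpace X]
    (h : ∃ c : Compactification X, ∃ G : ℕ → Set c.space,
      (∀ n, IsFsigma (G n)) ∧ Set.range c.emb = ⋂ n, G n) :
    ∀ c : Compactification X, ∃ G : ℕ → Set c.space,
      (∀ n, IsFsigma (G n)) ∧ Set.range c.emb = ⋂ n, G n := by
  classical
  obtain ⟨c0, G0, hG0, hEq0⟩ := h
  intro c
  set e : X → c.space := c.emb with he
  set e0 : X → c0.space := c0.emb with he0
  choose F hFcl hFeq using hG0
  -- The Souslin scheme of closed subsets of `X`.
  set D : List ℕ → Set X := fun s => ⋂ i : Fin s.length, e0 ⁻¹' F i.1 (s.get i) with hD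
  have hD_mem : ∀ (s : List ℕ) (x : X),
      x ∈ D s ↔ ∀ i : Fin s.length, e0 x ∈ F i.1 (s.get i) := by
    intro s x
    simp [hD]
  have hD_closed : ∀ s, IsClosed (D s) := fun s =>
    isClosed_iInter fun i => (hFcl i.1 (s.get i)).preimage c0.isEmbedding.continuous
  have hD_nil : D [] = Set.univ :=
    Set.eq_univ_of_forall fun x => (hD_mem [] x).2 fun i => absurd i.isLt (by simp)
  have hD_append_subset : ∀ (s : List ℕ) (k : ℕ), D (s ++ [k]) ⊆ D s := by
    intro s k x hx
    rw [hD_mem] at hx ⊢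
    intro i
    have hi : (i : ℕ) < (s ++ [k]).length := by
      simp only [List.length_append, List.length_singleton]
      omega
    have hiv := hx ⟨i, hi⟩
    have hget : (s ++ [k]).get ⟨(i : ℕ), hi⟩ = s.get i := by
      simp [List.get_eq_getElem, List.getElem_append_left i.2]
    rwa [hget] at hiv
  have hD_mem_append : ∀ (s : List ℕ) (k : ℕ) (x : X),
      x ∈ D s → e0 x ∈ F s.length k → x ∈ D (s ++ [k]) := by
    intro s k x hx hk
    rw [hD_mem] at hx ⊢
    intro i
    rcases Nat.lt_or_ge (i : ℕ) s.length with hi | hi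
    · have hget : (s ++ [k]).get i = s.get ⟨(i : ℕ), hi⟩ := by
        simp [List.get_eq_getElem, List.getElem_append_left hi]
      rw [hget]
      exact hx ⟨(i : ℕ), hi⟩
    · have hii : (i : ℕ) = s.length := by
        have := i.2
        simp only [List.length_append, List.length_singleton] at this
        omega
      have hget : (s ++ [k]).get i = k := by
        simp [List.get_eq_getElem, List.getElem_concat_length hii]
      rw [hget, hii]
      exact hk
  have hx_range : ∀ (x : X) (n : ℕ), ∃ k, e0 x ∈ F n k := by
    intro x n
    have hx : e0 x ∈ ⋂ n, G0 n := hEq0 ▸ Set.mem_range_self x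
    have := Set.mem_iInter.1 hx n
    rw [hFeq n] at this
    exact Set.mem_iUnion.1 this
  -- disjointness of the images of the complements from the closures
  have hLd : ∀ (s : List ℕ) (x : X), x ∉ D s → e x ∉ closure (e '' D s) := by
    intro s x hx hmem
    have hx' : x ∈ closure (D s) := by
      rw [c.isEmbedding.closure_eq_preimage_closure_image]
      exact hmem
    rw [(hD_closed s).closure_eq] at hx'
    exact hx hx'
  -- the separating F_σ sets
  have hT : ∀ s : List ℕ, ∃ T : Set c.space, IsFsigma T ∧ e '' (D s)ᶜ ⊆ T ∧
      ∀ y ∈ T, y ∉ closure (e '' D s) := by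
    intro s
    have hLin : IsLindelof (e '' (D s)ᶜ) :=
      (HereditarilyLindelof_LindelofSets _).image c.isEmbedding.continuous
    refine exists_fsigma_sep hLin isClosed_closure ?_
    rintro _ ⟨x, hx, rfl⟩
    exact hLd s x hx
  choose T hTf hTsub hTd using hT
  -- the F_σ sets whose intersection is the range
  set H : List ℕ → Set c.space :=
    fun s => T s ∪ ⋃ k : ℕ, closure (e '' D (s ++ [k])) with hH
  have hHf : ∀ s, IsFsigma (H s) :=
    fun s => (hTf s).union (isFsigma_iUnion_closed fun _ => isClosed_closure)
  have hXH : ∀ (x : X) (s : List ℕ), e x ∈ H s := by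
    intro x s
    by_cases hx : x ∈ D s
    · obtain ⟨k, hk⟩ := hx_range x s.length
      exact Set.mem_union_right _ <|
        Set.mem_iUnion.2 ⟨k, subset_closure ⟨x, hD_mem_append s k x hx hk, rfl⟩⟩
    · exact Set.mem_union_left _ (hTsub s ⟨x, hx, rfl⟩)
  have main : ∀ y : c.space, (∀ s, y ∈ H s) → y ∈ Set.range e := by
    intro y hy
    have step : ∀ s : List ℕ, y ∈ closure (e '' D s) →
        ∃ k, y ∈ closure (e '' D (s ++ [k])) := by
      intro s hs
      rcases hy s with hT' | hU
      · exact absurd hs (hTd s y hT')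
      · exact Set.mem_iUnion.1 hU
    have base : y ∈ closure (e '' D []) := by
      have himg : e '' D [] = Set.range e := by rw [hD_nil, Set.image_univ]
      rw [himg, c.dense.closure_range]
      trivial
    -- the branch
    let σ : ℕ → {s : List ℕ // y ∈ closure (e '' D s)} := fun n =>
      Nat.rec ⟨[], base⟩ (fun _ p => ⟨p.1 ++ [Classical.choose (step p.1 p.2)],
        Classical.choose_spec (step p.1 p.2)⟩) n
    have hσlen : ∀ n, ((σ n).1).length = n := by
      intro n
      induction n with
      | zero => rfl
      | succ n ih => simp [σ, List.length_append, ih]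
    set A : ℕ → Set X := fun n => D (σ n).1 with hA
    have hA_anti : Antitone A := by
      apply antitone_nat_of_succ_le
      intro n
      exact hD_append_subset (σ n).1 _
    -- the filter
    set ℱ : Filter X := Filter.comap e (𝓝 y) ⊓ ⨅ n, Filter.principal (A n) with hℱ
    have hBasis : (⨅ n, Filter.principal (A n)).HasBasis (fun _ : ℕ => True) A :=
      Filter.hasBasis_iInf_principal hA_anti.directed_ge
    have hBasis2 : ℱ.HasBasis (fun Vn : Set c.space × ℕ => (y ∈ Vn.1 ∧ IsOpen Vn.1) ∧ True)
        (fun Vn => e ⁻¹' Vn.1 ∩ A Vn.2) :=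
      ((nhds_basis_opens y).comap e).inf hBasis
    have hne : ℱ.NeBot := by
      rw [hBasis2.neBot_iff]
      rintro ⟨V, n⟩ ⟨⟨hyV, hVopen⟩, -⟩
      have hclo : y ∈ closure (e '' A n) := (σ n).2
      obtain ⟨z, hzV, hzA⟩ := (mem_closure_iff.1 hclo) V hVopen hyV
      obtain ⟨x, hxA, rfl⟩ := hzA
      exact ⟨x, hzV, hxA⟩
    obtain ⟨U, hU⟩ := Filter.exists_ultrafilter_le ℱ
    obtain ⟨y0, -, hy0⟩ := isCompact_univ.ultrafilter_le_nhds (U.map e0)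
      (Filter.le_principal_iff.2 Filter.univ_mem)
    have hAU : ∀ n, A n ∈ U := fun n =>
      hU (Filter.mem_inf_of_right (Filter.mem_iInf_of_mem n (Filter.mem_principal_self _)))
    have hy0mem : ∀ i : ℕ, ∃ k, y0 ∈ F i k := by
      intro i
      have hi : i < ((σ (i + 1)).1).length := by
        have hl := hσlen (i + 1); omega
      refine ⟨(σ (i + 1)).1.get ⟨i, hi⟩, ?_⟩
      have hsub : A (i + 1) ⊆ e0 ⁻¹' F i ((σ (i + 1)).1.get ⟨i, hi⟩) := by
        intro x hx
        exact (hD_mem _ x).1 hx ⟨i, hi⟩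
      have hmem : F i ((σ (i + 1)).1.get ⟨i, hi⟩) ∈ U.map e0 :=
        Ultrafilter.mem_map.2 (Filter.mem_of_superset (hAU (i + 1)) hsub)
      have hcl : IsClosed (F i ((σ (i + 1)).1.get ⟨i, hi⟩)) := hFcl _ _
      have : (U.map e0 : Filter c0.space) ≤ 𝓝 y0 ⊓ Filter.principal
          (F i ((σ (i + 1)).1.get ⟨i, hi⟩)) :=
        le_inf hy0 (Filter.le_principal_iff.2 hmem)
      have hclu : ClusterPt y0 (Filter.principal (F i ((σ (i + 1)).1.get ⟨i, hi⟩))) :=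
        Filter.neBot_of_le this
      rw [← hcl.closure_eq]
      exact mem_closure_iff_clusterPt.2 hclu
    have hy0range : y0 ∈ Set.range e0 := by
      rw [hEq0]
      exact Set.mem_iInter.2 fun n => (hFeq n) ▸ Set.mem_iUnion.2 (hy0mem n)
    obtain ⟨x0, hx0⟩ := hy0range
    have hUx0 : (U : Filter X) ≤ 𝓝 x0 := by
      have h1 : (U.map e0 : Filter c0.space) ≤ 𝓝 (e0 x0) := hx0 ▸ hy0
      rw [c0.isEmbedding.toIsInducing.nhds_eq_comap x0]
      exact Filter.map_le_iff_le_comap.1 h1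
    have h2 : Filter.Tendsto e (U : Filter X) (𝓝 (e x0)) :=
      (c.isEmbedding.continuous.tendsto x0).mono_left hUx0
    have h3 : Filter.Tendsto e (U : Filter X) (𝓝 y) :=
      Filter.map_le_iff_le_comap.2 (le_trans hU inf_le_left)
    exact ⟨x0, tendsto_nhds_unique h2 h3⟩
  -- assemble
  refine ⟨fun n => H ((Denumerable.eqv (List ℕ)).symm n),
    fun n => hHf _, ?_⟩
  rw [(Denumerable.eqv (List ℕ)).symm.surjective.iInter_comp (g := fun s => H s)]
  apply Set.Subset.antisymm
  · rintro _ ⟨x, rfl⟩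
    exact Set.mem_iInter.2 fun s => hXH x s
  · intro y hy
    exact main y fun s => Set.mem_iInter.1 hy s
end

section
/- Let X be a separable metrizable space and cX any compactification of X. Then there exists a metrizable compactification dX of X with dX ⪯ cX (i.e., cX maps continuously onto dX restricting to the identity on X). -/
universe u

open Topology TopologicalSpace

open Filter Metric Set
open scoped BoundedContinuousFunction

/-- Key lemma: there is a continuous map `F` from `c.space` to `l^∞` such that
`F ∘ c.emb` is an embedding of `X`. -/
theorem exists_continuous_comp_isEmbedding {X : Type u} [TopologicalSpace X]
    [SeparableSpace X] [MetrizableSpace X] (c : Compactification X) :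
    ∃ F : c.space → ℕ →ᵇ ℝ, Continuous F ∧ IsEmbedding (fun x : X => F (c.emb x)) := by
  letI : MetricSpace X := metrizableSpaceMetric X
  haveI : SecondCountableTopology X := UniformSpace.secondCountable_of_separable X
  rcases exists_countable_basis X with ⟨B, hBc, -, hB⟩
  -- choose, for each basic open set `V` of `X`, an open `u V ⊆ c.space` with
  -- `c.emb ⁻¹' (u V) = V`.
  have hu : ∀ V ∈ B, ∃ O : Set c.space, IsOpen O ∧ c.emb ⁻¹' O = V := by
    intro V hV
    exact c.isEmbedding.isInducing.isOpen_iff.1 (hB.isOpen hV)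
  choose! u huo hupre using hu
  -- the countable index set of pairs
  let s : Set (Set X × Set X) := { UV ∈ B ×ˢ B | closure (c.emb '' UV.1) ⊆ u UV.2 }
  haveI : Encodable s := ((hBc.prod hBc).mono inter_subset_left).toEncodable
  letI : TopologicalSpace s := ⊥
  haveI : DiscreteTopology s := ⟨rfl⟩
  rsuffices ⟨F, hFc, hFe⟩ : ∃ F : c.space → s →ᵇ ℝ, Continuous F ∧
      IsEmbedding (fun x : X => F (c.emb x))
  · refine ⟨fun y => (F y).extend (Encodable.encode' s) 0, ?_, ?_⟩
    · exact (BoundedContinuousFunction.isometry_extend (Encodable.encode' s)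
        (0 : ℕ →ᵇ ℝ)).continuous.comp hFc
    · exact ((BoundedContinuousFunction.isometry_extend (Encodable.encode' s)
        (0 : ℕ →ᵇ ℝ)).isEmbedding).comp hFe
  have hd : ∀ UV : s, Disjoint (closure (c.emb '' UV.1.1)) (u UV.1.2)ᶜ :=
    fun UV => disjoint_compl_right.mono_left UV.2.2
  obtain ⟨ε, ε01, hε⟩ : ∃ ε : s → ℝ, (∀ UV, ε UV ∈ Ioc (0 : ℝ) 1) ∧ Tendsto ε cofinite (𝓝 0) := by
    rcases posSumOfEncodable zero_lt_one s with ⟨ε, ε0, c', hεc, hc1⟩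
    refine ⟨ε, fun UV => ⟨ε0 UV, ?_⟩, hεc.summable.tendsto_cofinite_zero⟩
    exact (le_hasSum hεc UV fun _ _ => (ε0 _).le).trans hc1
  have : ∀ UV : s, ∃ f : C(c.space, ℝ),
      EqOn f 0 (closure (c.emb '' UV.1.1)) ∧ EqOn f (fun _ => ε UV) (u UV.1.2)ᶜ ∧
        ∀ y, f y ∈ Icc 0 (ε UV) := by
    intro UV
    rcases exists_continuous_zero_one_of_isClosed isClosed_closure
        (huo UV.1.2 UV.2.1.2).isClosed_compl (hd UV) with ⟨f, hf₀, hf₁, hf01⟩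
    exact ⟨ε UV • f, fun y hy => by simp [hf₀ hy], fun y hy => by simp [hf₁ hy],
      fun y => ⟨mul_nonneg (ε01 _).1.le (hf01 _).1, mul_le_of_le_one_right (ε01 _).1.le (hf01 _).2⟩⟩
  choose f hf0 hfε hf0ε using this
  have hf01 : ∀ UV y, f UV y ∈ Icc (0 : ℝ) 1 :=
    fun UV y => Icc_subset_Icc_right (ε01 _).2 (hf0ε _ _)
  set F : c.space → s →ᵇ ℝ := fun y =>
    ⟨⟨fun UV => f UV y, continuous_of_discreteTopology⟩, 1,
      fun UV₁ UV₂ => Real.dist_le_of_mem_Icc_01 (hf01 _ _) (hf01 _ _)⟩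
  have hF : ∀ y UV, F y UV = f UV y := fun _ _ => rfl
  have hFc : Continuous F := by
    refine continuous_iff_continuousAt.2 fun x => ?_
    rw [ContinuousAt, tendsto_iff_comap]
    refine (nhds_basis_closedBall.comap _).ge_iff.2 fun δ δ0 => ?_
    have h_fin : { UV : s | δ ≤ ε UV }.Finite := by simpa only [← not_lt, mem_map, mem_cofinite, preimage_setOf_eq, compl_setOf] using hε (gt_mem_nhds δ0)
    have : ∀ᶠ y in 𝓝 x, ∀ UV, δ ≤ ε UV → dist (F y UV) (F x UV) ≤ δ := by
      refine (eventually_all_finite h_fin).2 fun UV _ => ?_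
      exact (f UV).continuous.tendsto x (closedBall_mem_nhds _ δ0)
    refine this.mono fun y hy => (BoundedContinuousFunction.dist_le δ0.le).2 fun UV => ?_
    rcases le_total δ (ε UV) with hle | hle
    exacts [hy _ hle, (Real.dist_le_of_mem_Icc (hf0ε _ _) (hf0ε _ _)).trans (by rwa [sub_zero])]
  refine ⟨F, hFc, ?_⟩
  have hind : IsInducing (fun x : X => F (c.emb x)) := by
    refine isInducing_iff_nhds.2 fun x => le_antisymm ?_ ?_
    · exact tendsto_iff_comap.1 ((hFc.comp c.isEmbedding.continuous).tendsto x)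
    · refine ((nhds_basis_ball.comap _).le_basis_iff hB.nhds_hasBasis).2 ?_
      rintro V ⟨hVB, hxV⟩
      have hxu : c.emb x ∈ u V := by
        rw [← hupre V hVB] at hxV; exact hxV
      obtain ⟨W, hWnhds, hWclosed, hWsub⟩ :=
        exists_mem_nhds_isClosed_subset ((huo V hVB).mem_nhds hxu)
      have hWn : c.emb ⁻¹' interior W ∈ 𝓝 x :=
        (c.isEmbedding.continuous.continuousAt).preimage_mem_nhds (interior_mem_nhds.2 hWnhds)
      obtain ⟨U, ⟨hUB, hxU⟩, hUsub⟩ := hB.nhds_hasBasis.mem_iff.1 hWn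
      have hUV : closure (c.emb '' U) ⊆ u V := by
        refine (closure_minimal ?_ hWclosed).trans hWsub
        rintro y ⟨z, hz, rfl⟩
        exact interior_subset (hUsub hz)
      set UV : ↥s := ⟨(U, V), ⟨hUB, hVB⟩, hUV⟩
      refine ⟨ε UV, (ε01 UV).1, fun y hy => ?_⟩
      replace hy : dist (F (c.emb y) UV) (F (c.emb x) UV) < ε UV :=
        (BoundedContinuousFunction.dist_coe_le_dist _).trans_lt hy
      contrapose! hy
      have hyu : c.emb y ∈ (u V)ᶜ := by
        intro hmem
        exact hy (by rwa [← hupre V hVB])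
      rw [hF, hF, hfε UV hyu, hf0 UV (subset_closure ⟨x, hxU, rfl⟩), Pi.zero_apply,
        dist_zero_right]
      exact le_abs_self _
  exact ⟨hind, hind.injective⟩

/-- Let `X` be a separable metrizable space and `cX` any compactification of
`X`.  Then there is a metrizable compactification `dX` of `X` with `dX ⪯ cX`,
i.e. `cX` maps continuously onto `dX` commuting with the embeddings of `X`. -/
theorem exists_metrizable_smaller_compactification {X : Type u} [TopologicalSpace X]
    [SeparableSpace X] [MetrizableSpace X] (c : Compactification X) :
    ∃ d : Compactification X, MetrizableSpace d.space ∧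
      ∃ f : c.space → d.space, Continuous f ∧ ∀ x : X, f (c.emb x) = d.emb x := by
  obtain ⟨F, hFc, hFe⟩ := exists_continuous_comp_isEmbedding c
  set K : Set (ℕ →ᵇ ℝ) := Set.range F with hK
  have hKc : IsCompact K := isCompact_range hFc
  haveI : CompactSpace ↥K := isCompact_iff_compactSpace.1 hKc
  haveI : CompactSpace (ULift.{u} ↥K) := Homeomorph.ulift.symm.compactSpace
  -- the restricted map
  have hmem : ∀ y : c.space, F y ∈ K := fun y => Set.mem_range_self y
  let G : c.space → ULift.{u} ↥K := fun y => ULift.up (K.codRestrict F hmem y)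
  have hGc : Continuous G := continuous_uliftUp.comp (hFc.codRestrict hmem)
  have hGsurj : Function.Surjective G := by
    rintro ⟨⟨-, y, rfl⟩⟩
    exact ⟨y, rfl⟩
  have hGemb : IsEmbedding (fun x : X => G (c.emb x)) := by
    have h1 : IsEmbedding (K.codRestrict (fun x : X => F (c.emb x))
        (fun x => hmem (c.emb x))) := hFe.codRestrict _ _
    exact (Homeomorph.ulift.symm.isEmbedding).comp h1
  have hGdense : DenseRange (fun x : X => G (c.emb x)) :=
    (hGsurj.denseRange.comp c.dense hGc).mono (by rintro z ⟨x, rfl⟩; exact ⟨x, rfl⟩)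
  refine ⟨⟨ULift.{u} ↥K, fun x => G (c.emb x), hGemb, hGdense⟩, inferInstance,
    G, hGc, fun x => rfl⟩
end

section
/- For each countable ordinal α ≤ ω₁, the 'maximal' tree T_α of height α satisfies r_l(T_α) = α and r_i(T_α) = α, where r_l is the leaf-rank and r_i the infinite-branching rank. -/
open scoped Ordinal

/-- The leaf derivative: those `t ∈ T` having a proper extension in `T`. -/
def derivL (T : Set (List ℕ)) : Set (List ℕ) :=
  {t ∈ T | ∃ s ∈ T, t <+: s ∧ s ≠ t}

/-- The infinite-branching derivative: those `t ∈ T` having infinitely many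
extensions in `T`. -/
def derivI (T : Set (List ℕ)) : Set (List ℕ) :=
  {t ∈ T | {s ∈ T | t <+: s}.Infinite}

/-- Iterates of a derivative `D` on sets of finite sequences. -/
noncomputable def iterDeriv (D : Set (List ℕ) → Set (List ℕ)) (T : Set (List ℕ))
    (α : Ordinal) : Set (List ℕ) :=
  Ordinal.limitRecOn α T (fun _ ih => D ih)
    (fun o _ ih => ⋂ β : Set.Iio o, ih β.1 β.2)

open Classical in
/-- The rank associated to a derivative `D`: the least `α` with
`D^{α+1}(T) = ∅`, and `ω₁` if there is no such `α`. -/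
noncomputable def rankOf (D : Set (List ℕ) → Set (List ℕ)) (T : Set (List ℕ)) : Ordinal :=
  if _ : ∃ α : Ordinal.{0}, iterDeriv D T (α + 1) = ∅ then
    sInf {α : Ordinal.{0} | iterDeriv D T (α + 1) = ∅}
  else ω₁

/-- The `maximal' trees `T_α` of height `α < ω₁`, built from a fixed choice of
bijections `π lam : ω → lam` for countable limit ordinals `lam`:
`T₀ = {∅}`, `T_{α+1} = {∅} ∪ ⋃_j j⌢T_α`, and
`T_lam = {∅} ∪ ⋃_j j⌢T_{π lam j}` for limit `lam`. -/
noncomputable def Ttree (π : Ordinal.{0} → ℕ → Ordinal.{0}) (α : Ordinal.{0}) :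
    Set (List ℕ) :=
  Ordinal.limitRecOn α {([] : List ℕ)}
    (fun _ ih => {([] : List ℕ)} ∪ ⋃ j : ℕ, (fun t => j :: t) '' ih)
    (fun lam _ ih => {([] : List ℕ)} ∪
      ⋃ j : ℕ, (fun t => j :: t) '' (if h : π lam j < lam then ih (π lam j) h else ∅))

/-- The trees `T_α` for `α ≤ ω₁`, with `T_{ω₁} := ω^{<ω}`. -/
noncomputable def Tmax (π : Ordinal.{0} → ℕ → Ordinal.{0}) (α : Ordinal.{0}) :
    Set (List ℕ) :=
  if α < ω₁ then Ttree π α else Set.univ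

namespace RankTmaxAux

/-! ### Unfolding lemmas for `iterDeriv` and `Ttree` -/

theorem iterDeriv_zero (D : Set (List ℕ) → Set (List ℕ)) (T : Set (List ℕ)) :
    iterDeriv D T 0 = T :=
  Ordinal.limitRecOn_zero ..

theorem iterDeriv_succ (D : Set (List ℕ) → Set (List ℕ)) (T : Set (List ℕ)) (α : Ordinal) :
    iterDeriv D T (α + 1) = D (iterDeriv D T α) := by
  rw [iterDeriv, Ordinal.add_one_eq_succ, Ordinal.limitRecOn_succ]; rfl

theorem iterDeriv_limit (D : Set (List ℕ) → Set (List ℕ)) (T : Set (List ℕ))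
    {o : Ordinal} (h : Order.IsSuccLimit o) :
    iterDeriv D T o = ⋂ β : Set.Iio o, iterDeriv D T β.1 := by
  rw [iterDeriv, Ordinal.limitRecOn_limit _ _ _ _ h]; rfl

/-- The cone over a family of trees. -/
def cone (U : ℕ → Set (List ℕ)) : Set (List ℕ) :=
  {([] : List ℕ)} ∪ ⋃ j : ℕ, (fun t => j :: t) '' U j

theorem mem_cone {U : ℕ → Set (List ℕ)} {s : List ℕ} :
    s ∈ cone U ↔ s = [] ∨ ∃ j t, t ∈ U j ∧ s = j :: t := by
  simp only [cone, Set.mem_union, Set.mem_singleton_iff, Set.mem_iUnion, Set.mem_image]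
  constructor
  · rintro (h | ⟨j, t, ht, rfl⟩)
    · exact Or.inl h
    · exact Or.inr ⟨j, t, ht, rfl⟩
  · rintro (h | ⟨j, t, ht, rfl⟩)
    · exact Or.inl h
    · exact Or.inr ⟨j, t, ht, rfl⟩

theorem nil_mem_cone (U : ℕ → Set (List ℕ)) : ([] : List ℕ) ∈ cone U :=
  mem_cone.mpr (Or.inl rfl)

theorem cons_mem_cone {U : ℕ → Set (List ℕ)} {j : ℕ} {t : List ℕ} :
    (j :: t) ∈ cone U ↔ t ∈ U j := by
  rw [mem_cone]
  constructor
  · rintro (h | ⟨j', t', ht', h⟩)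
    · simp at h
    · obtain ⟨rfl, rfl⟩ : j = j' ∧ t = t' := by simpa using h
      exact ht'
  · intro h; exact Or.inr ⟨j, t, h, rfl⟩

theorem cone_empty : cone (fun _ => (∅ : Set (List ℕ))) = {([] : List ℕ)} := by
  simp [cone]

theorem Ttree_zero (π : Ordinal.{0} → ℕ → Ordinal.{0}) : Ttree π 0 = {([] : List ℕ)} :=
  Ordinal.limitRecOn_zero ..

theorem Ttree_succ (π : Ordinal.{0} → ℕ → Ordinal.{0}) (α : Ordinal.{0}) :
    Ttree π (α + 1) = cone (fun _ => Ttree π α) := by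
  rw [Ttree, Ordinal.add_one_eq_succ, Ordinal.limitRecOn_succ]; rfl

theorem Ttree_limit (π : Ordinal.{0} → ℕ → Ordinal.{0}) {lam : Ordinal.{0}}
    (h : Order.IsSuccLimit lam) (h2 : ∀ j : ℕ, π lam j < lam) :
    Ttree π lam = cone (fun j => Ttree π (π lam j)) := by
  rw [Ttree, Ordinal.limitRecOn_limit _ _ _ _ h]
  unfold cone
  congr 1
  ext s
  simp only [Set.mem_iUnion, Set.mem_image]
  constructor
  · rintro ⟨j, t, ht, rfl⟩
    rw [dif_pos (h2 j)] at ht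
    exact ⟨j, t, ht, rfl⟩
  · rintro ⟨j, t, ht, rfl⟩
    exact ⟨j, t, by rw [dif_pos (h2 j)]; exact ht, rfl⟩

/-! ### Cone lemmas for the derivatives -/

theorem derivL_cone {U : ℕ → Set (List ℕ)} (h : ∃ j, (U j).Nonempty) :
    derivL (cone U) = cone (fun j => derivL (U j)) := by
  ext s
  rcases s with - | ⟨j, t⟩
  · simp only [derivL, Set.mem_sep_iff, nil_mem_cone, true_and, iff_true]
    obtain ⟨j, t, ht⟩ := h
    exact ⟨j :: t, cons_mem_cone.mpr ht, List.nil_prefix, by simp⟩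
  · simp only [derivL, Set.mem_sep_iff, cons_mem_cone]
    constructor
    · rintro ⟨ht, s, hs, hpre, hne⟩
      rcases s with - | ⟨j', s'⟩
      · simp [List.prefix_nil] at hpre
      · obtain ⟨rfl, hpre'⟩ := List.cons_prefix_cons.mp hpre
        exact ⟨ht, s', cons_mem_cone.mp hs, hpre', fun hst => hne (by rw [hst])⟩
    · rintro ⟨ht, s, hs, hpre, hne⟩
      exact ⟨ht, j :: s, cons_mem_cone.mpr hs, List.cons_prefix_cons.mpr ⟨rfl, hpre⟩,
        by simpa using hne⟩

theorem cone_infinite {U : ℕ → Set (List ℕ)} (h : {j | (U j).Nonempty}.Infinite) :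
    (cone U).Infinite := by
  haveI : Infinite {j | (U j).Nonempty} := Set.infinite_coe_iff.mpr h
  refine Set.infinite_of_injective_forall_mem
    (f := fun j : {j | (U j).Nonempty} => (j : ℕ) :: j.2.some) ?_ ?_
  · intro a b hab
    apply Subtype.ext
    simpa using congrArg (fun l : List ℕ => l.headI) hab
  · intro j
    exact cons_mem_cone.mpr j.2.some_mem

theorem derivI_cone {U : ℕ → Set (List ℕ)} (h : {j | (U j).Nonempty}.Infinite) :
    derivI (cone U) = cone (fun j => derivI (U j)) := by
  ext s
  rcases s with - | ⟨j, t⟩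
  · simp only [derivI, Set.mem_sep_iff, nil_mem_cone, true_and, iff_true]
    have : {s ∈ cone U | [] <+: s} = cone U := by
      ext s; simp [List.nil_prefix]
    rw [this]
    exact cone_infinite h
  · simp only [derivI, Set.mem_sep_iff, cons_mem_cone]
    have key : {s ∈ cone U | j :: t <+: s} = (fun t' => j :: t') '' {s ∈ U j | t <+: s} := by
      ext s
      rcases s with - | ⟨j', s'⟩
      · simp [List.prefix_nil]
      · simp only [Set.mem_sep_iff, cons_mem_cone, List.cons_prefix_cons, Set.mem_image]
        constructor
        · rintro ⟨hs, rfl, hpre⟩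
          exact ⟨s', ⟨hs, hpre⟩, rfl⟩
        · rintro ⟨s'', ⟨hs, hpre⟩, heq⟩
          obtain ⟨rfl, rfl⟩ : j = j' ∧ s'' = s' := by simpa using heq
          exact ⟨hs, rfl, hpre⟩
    rw [key, Set.infinite_image_iff (Set.injOn_of_injective (fun a b hab => by simpa using hab))]

theorem cone_iInter {ι : Type*} [Nonempty ι] (U : ι → ℕ → Set (List ℕ)) :
    (⋂ i, cone (U i)) = cone (fun j => ⋂ i, U i j) := by
  ext s
  rcases s with - | ⟨j, t⟩
  · simp [nil_mem_cone]
  · simp [cons_mem_cone]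

/-! ### Abstract development for a derivative `D` -/

variable {D : Set (List ℕ) → Set (List ℕ)}

theorem iterDeriv_antitone (hsub : ∀ T, D T ⊆ T) (T : Set (List ℕ)) :
    ∀ γ : Ordinal, ∀ β ≤ γ, iterDeriv D T γ ⊆ iterDeriv D T β := by
  intro γ
  induction γ using Ordinal.induction with
  | h γ IH =>
    intro β hβ
    rcases eq_or_lt_of_le hβ with rfl | hlt
    · exact subset_rfl
    rcases Ordinal.zero_or_succ_or_isSuccLimit γ with rfl | ⟨δ, rfl⟩ | hl
    · exact absurd hlt (not_lt_of_ge (zero_le (a := β)))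
    · rw [← Ordinal.add_one_eq_succ] at *
      have hβδ : β ≤ δ := Order.lt_succ_iff.mp (by rwa [Ordinal.add_one_eq_succ] at hlt)
      calc iterDeriv D T (δ + 1) = D (iterDeriv D T δ) := iterDeriv_succ ..
        _ ⊆ iterDeriv D T δ := hsub _
        _ ⊆ iterDeriv D T β := IH δ (by rw [Ordinal.add_one_eq_succ]; exact Order.lt_succ δ) β hβδ
    · rw [iterDeriv_limit D T hl]
      exact Set.iInter_subset (fun b : Set.Iio γ => iterDeriv D T b.1) ⟨β, hlt⟩

theorem rankOf_eq_of_iterDeriv (hsub : ∀ T, D T ⊆ T) (hnil : D {([] : List ℕ)} = ∅)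
    {T : Set (List ℕ)} {α : Ordinal.{0}} (h : iterDeriv D T α = {([] : List ℕ)}) :
    rankOf D T = α := by
  have h1 : iterDeriv D T (α + 1) = ∅ := by rw [iterDeriv_succ, h, hnil]
  have hlb : ∀ β ∈ {β : Ordinal.{0} | iterDeriv D T (β + 1) = ∅}, α ≤ β := by
    intro β hβ
    by_contra hc
    push_neg at hc
    have : iterDeriv D T α ⊆ iterDeriv D T (β + 1) :=
      iterDeriv_antitone hsub T α (β + 1) (by rwa [Ordinal.add_one_eq_succ, Order.succ_le_iff])
    rw [h, hβ] at this
    exact this rfl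
  rw [rankOf, dif_pos ⟨α, h1⟩]
  exact IsLeast.csInf_eq ⟨h1, hlb⟩

theorem iterDeriv_univ (huniv : D Set.univ = Set.univ) :
    ∀ β : Ordinal, iterDeriv D Set.univ β = Set.univ := by
  intro β
  induction β using Ordinal.induction with
  | h β IH =>
    rcases Ordinal.zero_or_succ_or_isSuccLimit β with rfl | ⟨δ, rfl⟩ | hl
    · exact iterDeriv_zero ..
    · rw [← Ordinal.add_one_eq_succ, iterDeriv_succ]
      rw [IH δ (Order.lt_succ δ), huniv]
    · rw [iterDeriv_limit D _ hl]
      simp only [Set.iInter_eq_univ]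
      exact fun b => IH b.1 b.2

theorem rankOf_univ (huniv : D Set.univ = Set.univ) : rankOf D Set.univ = ω₁ := by
  rw [rankOf, dif_neg]
  rintro ⟨α, hα⟩
  rw [iterDeriv_univ huniv] at hα
  exact Set.empty_ne_univ hα.symm

/-- The main inductive lemma: for `α < ω₁`, the `α`-th derivative of `Ttree π α`
is exactly `{[]}`. -/
theorem iterDeriv_Ttree (hsub : ∀ T, D T ⊆ T) (hnil : D {([] : List ℕ)} = ∅)
    (hcone : ∀ U : ℕ → Set (List ℕ), {j | (U j).Nonempty}.Infinite →
      D (cone U) = cone (fun j => D (U j)))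
    (π : Ordinal.{0} → ℕ → Ordinal.{0})
    (hπ : ∀ lam : Ordinal.{0}, Order.IsSuccLimit lam → lam < ω₁ →
      (∀ j : ℕ, π lam j < lam) ∧ ∀ β < lam, ∃! j : ℕ, π lam j = β) :
    ∀ α : Ordinal.{0}, α < ω₁ → iterDeriv D (Ttree π α) α = {([] : List ℕ)} := by
  intro α
  induction α using Ordinal.induction with
  | h α IH =>
    intro hαω
    rcases Ordinal.zero_or_succ_or_isSuccLimit α with rfl | ⟨γ, rfl⟩ | hl
    · rw [iterDeriv_zero, Ttree_zero]
    · -- successor case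
      rw [← Ordinal.add_one_eq_succ] at *
      have hγlt : γ < γ + 1 := by rw [Ordinal.add_one_eq_succ]; exact Order.lt_succ γ
      have hγω : γ < ω₁ := hγlt.trans hαω
      have IHγ : iterDeriv D (Ttree π γ) γ = {([] : List ℕ)} := IH γ hγlt hγω
      have hne : ∀ β ≤ γ, ([] : List ℕ) ∈ iterDeriv D (Ttree π γ) β := by
        intro β hβ
        exact iterDeriv_antitone hsub _ γ β hβ (by rw [IHγ]; rfl)
      have key : ∀ β ≤ γ, iterDeriv D (Ttree π (γ + 1)) β
          = cone (fun _ => iterDeriv D (Ttree π γ) β) := by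
        intro β
        induction β using Ordinal.induction with
        | h β IHβ =>
          intro hβγ
          rcases Ordinal.zero_or_succ_or_isSuccLimit β with rfl | ⟨δ, rfl⟩ | hlb
          · rw [iterDeriv_zero, iterDeriv_zero, Ttree_succ]
          · rw [← Ordinal.add_one_eq_succ] at *
            have hδlt : δ < δ + 1 := by rw [Ordinal.add_one_eq_succ]; exact Order.lt_succ δ
            have hδγ : δ ≤ γ := le_of_lt (lt_of_lt_of_le hδlt hβγ)
            rw [iterDeriv_succ, IHβ δ hδlt hδγ,
              hcone _ (by
                have : {j : ℕ | (iterDeriv D (Ttree π γ) δ).Nonempty} = Set.univ :=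
                  Set.eq_univ_of_forall (fun j => ⟨[], hne δ hδγ⟩)
                rw [this]; exact Set.infinite_univ),
              iterDeriv_succ]
          · haveI : Nonempty (Set.Iio β) := ⟨⟨0, hlb.pos⟩⟩
            rw [iterDeriv_limit D _ hlb, iterDeriv_limit D _ hlb]
            calc (⋂ δ : Set.Iio β, iterDeriv D (Ttree π (γ + 1)) δ.1)
                = ⋂ δ : Set.Iio β, cone (fun _ => iterDeriv D (Ttree π γ) δ.1) := by
                  apply Set.iInter_congr
                  intro δ
                  exact IHβ δ.1 δ.2 (le_of_lt (lt_of_lt_of_le δ.2 hβγ))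
              _ = cone (fun _ => ⋂ δ : Set.Iio β, iterDeriv D (Ttree π γ) δ.1) :=
                  cone_iInter (fun (δ : Set.Iio β) (_ : ℕ) => iterDeriv D (Ttree π γ) δ.1)
      rw [iterDeriv_succ, key γ le_rfl, IHγ,
        hcone _ (by
          have : {j : ℕ | ({([] : List ℕ)} : Set (List ℕ)).Nonempty} = Set.univ :=
            Set.eq_univ_of_forall (fun j => ⟨[], rfl⟩)
          rw [this]; exact Set.infinite_univ),
        hnil, cone_empty]
    · -- limit case
      obtain ⟨hπlt, hπsur⟩ := hπ α hl hαω
      have hTα : Ttree π α = cone (fun j => Ttree π (π α j)) := Ttree_limit π hl hπlt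
      have hIHj : ∀ j : ℕ, iterDeriv D (Ttree π (π α j)) (π α j) = {([] : List ℕ)} :=
        fun j => IH (π α j) (hπlt j) ((hπlt j).trans hαω)
      have hne : ∀ (j : ℕ) (β : Ordinal), β ≤ π α j →
          ([] : List ℕ) ∈ iterDeriv D (Ttree π (π α j)) β := by
        intro j β hβ
        exact iterDeriv_antitone hsub _ (π α j) β hβ (by rw [hIHj j]; rfl)
      have hinf : ∀ δ < α, {j : ℕ | (iterDeriv D (Ttree π (π α j)) δ).Nonempty}.Infinite := by
        intro δ hδ
        have hlt : ∀ n : ℕ, δ + n < α := by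
          intro n
          induction n with
          | zero => simpa using hδ
          | succ m ih =>
            have : (δ + m) + 1 < α := by
              rw [Ordinal.add_one_eq_succ]; exact hl.succ_lt ih
            calc δ + (m + 1 : ℕ) = δ + ((m : Ordinal) + 1) := by push_cast; ring_nf
              _ = (δ + m) + 1 := by rw [add_assoc]
              _ < α := this
        set f : ℕ → ℕ := fun n => (hπsur (δ + n) (hlt n)).exists.choose with hf
        have hfval : ∀ n : ℕ, π α (f n) = δ + n := fun n => (hπsur (δ + n) (hlt n)).exists.choose_spec
        refine Set.infinite_of_injective_forall_mem (f := f) ?_ ?_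
        · intro a b hab
          have : (δ + a : Ordinal) = δ + b := by rw [← hfval a, ← hfval b, hab]
          exact_mod_cast add_left_cancel this
        · intro n
          refine ⟨[], hne (f n) δ ?_⟩
          rw [hfval n]
          exact le_self_add
      have key : ∀ β ≤ α, iterDeriv D (Ttree π α) β
          = cone (fun j => iterDeriv D (Ttree π (π α j)) β) := by
        intro β
        induction β using Ordinal.induction with
        | h β IHβ =>
          intro hβα
          rcases Ordinal.zero_or_succ_or_isSuccLimit β with rfl | ⟨δ, rfl⟩ | hlb
          · rw [hTα]
            simp only [iterDeriv_zero]
          · rw [← Ordinal.add_one_eq_succ] at *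
            have hδlt : δ < δ + 1 := by rw [Ordinal.add_one_eq_succ]; exact Order.lt_succ δ
            have hδα : δ < α := lt_of_lt_of_le hδlt hβα
            rw [iterDeriv_succ, IHβ δ hδlt (le_of_lt hδα), hcone _ (hinf δ hδα)]
            simp only [iterDeriv_succ]
          · haveI : Nonempty (Set.Iio β) := ⟨⟨0, hlb.pos⟩⟩
            rw [iterDeriv_limit D _ hlb]
            calc (⋂ δ : Set.Iio β, iterDeriv D (Ttree π α) δ.1)
                = ⋂ δ : Set.Iio β, cone (fun j => iterDeriv D (Ttree π (π α j)) δ.1) := by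
                  apply Set.iInter_congr
                  intro δ
                  exact IHβ δ.1 δ.2 (le_of_lt (lt_of_lt_of_le δ.2 hβα))
              _ = cone (fun j => ⋂ δ : Set.Iio β, iterDeriv D (Ttree π (π α j)) δ.1) :=
                  cone_iInter (fun (δ : Set.Iio β) (j : ℕ) => iterDeriv D (Ttree π (π α j)) δ.1)
              _ = cone (fun j => iterDeriv D (Ttree π (π α j)) β) := by
                  have hrw : ∀ T, iterDeriv D T β = ⋂ δ : Set.Iio β, iterDeriv D T δ.1 :=
                    fun T => iterDeriv_limit D T hlb
                  simp only [hrw]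
      have hfin : ∀ j : ℕ, iterDeriv D (Ttree π (π α j)) α = ∅ := by
        intro j
        have h1 : iterDeriv D (Ttree π (π α j)) (π α j + 1) = ∅ := by
          rw [iterDeriv_succ, hIHj j, hnil]
        have h2 : π α j + 1 ≤ α := by
          rw [Ordinal.add_one_eq_succ]; exact le_of_lt (hl.succ_lt (hπlt j))
        have := iterDeriv_antitone hsub (Ttree π (π α j)) α (π α j + 1) h2
        rw [h1] at this
        exact Set.subset_empty_iff.mp this
      rw [key α le_rfl]
      calc cone (fun j => iterDeriv D (Ttree π (π α j)) α)
          = cone (fun _ => (∅ : Set (List ℕ))) := by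
            simp only [hfin]
        _ = {([] : List ℕ)} := cone_empty

/-! ### The two derivatives satisfy the hypotheses -/

theorem derivL_subset (T : Set (List ℕ)) : derivL T ⊆ T := Set.sep_subset _ _

theorem derivI_subset (T : Set (List ℕ)) : derivI T ⊆ T := Set.sep_subset _ _

theorem derivL_nil : derivL {([] : List ℕ)} = ∅ := by
  ext t
  simp only [Set.mem_empty_iff_false, iff_false]
  rintro ⟨ht, s, hs, -, hne⟩
  rw [Set.mem_singleton_iff] at ht hs
  exact hne (hs.trans ht.symm)

theorem derivI_nil : derivI {([] : List ℕ)} = ∅ := by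
  ext t
  simp only [Set.mem_empty_iff_false, iff_false]
  rintro ⟨ht, hinf⟩
  refine hinf (Set.Finite.subset (Set.finite_singleton ([] : List ℕ)) ?_)
  intro s hs
  exact hs.1

theorem derivL_univ : derivL Set.univ = Set.univ := by
  apply Set.eq_univ_of_forall
  intro t
  exact ⟨trivial, t ++ [0], trivial, List.prefix_append t [0], by simp⟩

theorem derivI_univ : derivI Set.univ = Set.univ := by
  apply Set.eq_univ_of_forall
  intro t
  refine ⟨trivial, ?_⟩
  refine Set.infinite_of_injective_forall_mem (f := fun n : ℕ => t ++ [n]) ?_ ?_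
  · intro a b hab
    simpa using List.append_cancel_left hab
  · intro n
    exact ⟨trivial, List.prefix_append t [n]⟩

end RankTmaxAux


/-- For each `α ≤ ω₁`, the maximal tree `T_α` of height `α` has leaf-rank
`r_l(T_α) = α` and infinite-branching rank `r_i(T_α) = α`. -/
theorem rank_Tmax (π : Ordinal.{0} → ℕ → Ordinal.{0})
    (hπ : ∀ lam : Ordinal.{0}, Order.IsSuccLimit lam → lam < ω₁ →
      (∀ j : ℕ, π lam j < lam) ∧ ∀ β < lam, ∃! j : ℕ, π lam j = β) :
    ∀ α ≤ ω₁, rankOf derivL (Tmax π α) = α ∧ rankOf derivI (Tmax π α) = α := by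
  intro α hα
  rcases eq_or_lt_of_le hα with rfl | hlt
  · have hT : Tmax π ω₁ = Set.univ := by rw [Tmax, if_neg (lt_irrefl ω₁)]
    rw [hT]
    exact ⟨RankTmaxAux.rankOf_univ RankTmaxAux.derivL_univ,
      RankTmaxAux.rankOf_univ RankTmaxAux.derivI_univ⟩
  · have hT : Tmax π α = Ttree π α := by rw [Tmax, if_pos hlt]
    rw [hT]
    constructor
    · exact RankTmaxAux.rankOf_eq_of_iterDeriv RankTmaxAux.derivL_subset RankTmaxAux.derivL_nil
        (RankTmaxAux.iterDeriv_Ttree RankTmaxAux.derivL_subset RankTmaxAux.derivL_nil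
          (fun U h => RankTmaxAux.derivL_cone h.nonempty) π hπ α hlt)
    · exact RankTmaxAux.rankOf_eq_of_iterDeriv RankTmaxAux.derivI_subset RankTmaxAux.derivI_nil
        (RankTmaxAux.iterDeriv_Ttree RankTmaxAux.derivI_subset RankTmaxAux.derivI_nil
          (fun U h => RankTmaxAux.derivI_cone h) π hπ α hlt)
end

section
/- Let X be an F-Borel subset of a topological space Y (i.e., X ∈ ℱ_α(Y) for some α < ω₁). Then for every y ∈ Y \ X there is a G_δ subset G of Y with y ∈ G ⊆ Y \ X. -/
open scoped Ordinal

/-- An ordinal is even if it equals `lam + 2n` with `lam` limit or zero. -/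
def EvenOrd (α : Ordinal.{0}) : Prop :=
  ∃ (lam : Ordinal.{0}) (n : ℕ), (Order.IsSuccLimit lam ∨ lam = 0) ∧ α = lam + (2 * n : ℕ)

/-- An ordinal is odd if it equals `lam + (2n+1)` with `lam` limit or zero. -/
def OddOrd (α : Ordinal.{0}) : Prop :=
  ∃ (lam : Ordinal.{0}) (n : ℕ), (Order.IsSuccLimit lam ∨ lam = 0) ∧ α = lam + (2 * n + 1 : ℕ)

open Classical in
/-- The `ℱ`-Borel hierarchy on `Y`: `ℱ₀` is the class of closed sets; for
`α > 0`, `ℱ_α` consists of countable unions (odd `α`) or countable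
intersections (even `α`) of sets from the classes `ℱ_β`, `β < α`. -/
noncomputable def Fclass (Y : Type*) [TopologicalSpace Y] : Ordinal.{0} → Set (Set Y) :=
  (wellFounded_lt (α := Ordinal.{0})).fix fun α ih =>
    if α = 0 then {s | IsClosed s}
    else if OddOrd α then
      {s | ∃ f : ℕ → Set Y,
        (∀ n, ∃ β : {b : Ordinal.{0} // b < α}, f n ∈ ih β.1 β.2) ∧ s = ⋃ n, f n}
    else
      {s | ∃ f : ℕ → Set Y,
        (∀ n, ∃ β : {b : Ordinal.{0} // b < α}, f n ∈ ih β.1 β.2) ∧ s = ⋂ n, f n}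


open Classical in
lemma Fclass_def (Y : Type*) [TopologicalSpace Y] (α : Ordinal.{0}) :
    Fclass Y α = if α = 0 then {s | IsClosed s}
    else if OddOrd α then
      {s | ∃ f : ℕ → Set Y,
        (∀ n, ∃ β : {b : Ordinal.{0} // b < α}, f n ∈ Fclass Y β.1) ∧ s = ⋃ n, f n}
    else
      {s | ∃ f : ℕ → Set Y,
        (∀ n, ∃ β : {b : Ordinal.{0} // b < α}, f n ∈ Fclass Y β.1) ∧ s = ⋂ n, f n} := by
  unfold Fclass
  exact WellFounded.fix_eq _ _ _

lemma gdelta_aux {Y : Type*} [TopologicalSpace Y] (α : Ordinal.{0}) :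
    ∀ X : Set Y, X ∈ Fclass Y α → ∀ y ∈ Xᶜ, ∃ G : Set Y, IsGδ G ∧ y ∈ G ∧ G ⊆ Xᶜ := by
  induction α using Ordinal.induction with
  | h α IH =>
  intro X hXα y hy
  rw [Fclass_def] at hXα
  split_ifs at hXα with h0 hodd
  · exact ⟨Xᶜ, hXα.isOpen_compl.isGδ, hy, subset_rfl⟩
  · obtain ⟨f, hf, rfl⟩ := hXα
    simp only [Set.mem_compl_iff, Set.mem_iUnion, not_exists] at hy
    have key : ∀ n, ∃ G : Set Y, IsGδ G ∧ y ∈ G ∧ G ⊆ (f n)ᶜ := fun n => by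
      obtain ⟨β, hβ⟩ := hf n
      exact IH β.1 β.2 _ hβ y (hy n)
    choose G hG hyG hsub using key
    refine ⟨⋂ n, G n, .iInter hG, Set.mem_iInter.2 hyG, ?_⟩
    rw [Set.compl_iUnion]
    exact Set.iInter_mono hsub
  · obtain ⟨f, hf, rfl⟩ := hXα
    simp only [Set.mem_compl_iff, Set.mem_iInter, not_forall] at hy
    obtain ⟨n, hn⟩ := hy
    obtain ⟨β, hβ⟩ := hf n
    obtain ⟨G, hG, hyG, hsub⟩ := IH β.1 β.2 _ hβ y hn
    refine ⟨G, hG, hyG, hsub.trans ?_⟩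
    rw [Set.compl_iInter]
    exact Set.subset_iUnion (fun n => (f n)ᶜ) n

/-- If `X` is an `ℱ`-Borel subset of `Y` (i.e. `X ∈ ℱ_α(Y)` for some
`α < ω₁`), then every `y ∈ Y \ X` is contained in a `G_δ` subset of `Y`
disjoint from `X`. -/
theorem gdelta_separation_of_FBorel {Y : Type*} [TopologicalSpace Y] (X : Set Y)
    (hX : ∃ α : Ordinal.{0}, α < ω₁ ∧ X ∈ Fclass Y α) :
    ∀ y ∈ Xᶜ, ∃ G : Set Y, IsGδ G ∧ y ∈ G ∧ G ⊆ Xᶜ := by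
  obtain ⟨α, -, hXα⟩ := hX
  exact gdelta_aux α X hXα
end

section
/- Let X be a non-reflexive Banach space. Then no weakly regularly closed subset of X with nonempty weak interior is weakly σ-compact; in particular, if K_n ⊆ X are weakly compact sets whose union has nonempty interior in the weak topology, a contradiction arises. Concretely: if a countable union of weakly compact subsets of a Banach space X contains a norm-open ball, then X is reflexive. -/
open Metric
open Set

theorem weak_t2' {X : Type*} [NormedAddCommGroup X] [NormedSpace ℝ X] :
    T2Space (WeakSpace ℝ X) := by
  have hinj : Function.Injective (topDualPairing ℝ X).flip := by
    intro a b hab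
    by_contra hne
    obtain ⟨f, hf⟩ := SeparatingDual.exists_ne_zero (R := ℝ) (sub_ne_zero.mpr hne)
    have h1 : f a = f b := LinearMap.ext_iff.mp hab f
    rw [map_sub, h1, sub_self] at hf
    exact hf rfl
  exact (WeakBilin.isEmbedding hinj).t2Space


/-- If a countable union of weakly compact subsets of a Banach space `X`
contains a norm-open ball, then `X` is reflexive, i.e. its closed unit ball is
weakly compact. -/
theorem reflexive_of_ball_subset_iUnion_weaklyCompact {X : Type*}
    [NormedAddCommGroup X] [NormedSpace ℝ X] [CompleteSpace X]
    (K : ℕ → Set X) (hK : ∀ n, IsCompact (toWeakSpace ℝ X '' K n))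
    (x : X) (ε : ℝ) (hε : 0 < ε) (hball : ball x ε ⊆ ⋃ n, K n) :
    IsCompact (toWeakSpace ℝ X '' closedBall (0 : X) 1) := by
  have hT2 : T2Space (WeakSpace ℝ X) := weak_t2'
  -- each K n is norm-closed
  have hKcl : ∀ n, IsClosed (K n) := by
    intro n
    have h1 : IsClosed (toWeakSpace ℝ X '' K n) := (hK n).isClosed
    have h2 : K n = toWeakSpaceCLM ℝ X ⁻¹' (toWeakSpace ℝ X '' K n) := by
      rw [show ⇑(toWeakSpaceCLM ℝ X) = ⇑(toWeakSpace ℝ X) from rfl,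
        Set.preimage_image_eq _ (toWeakSpace ℝ X).injective]
    rw [h2]
    exact h1.preimage (map_continuous (toWeakSpaceCLM ℝ X))
  -- Baire category: some K n contains a ball
  obtain ⟨z, r, hr, hzK⟩ : ∃ z r, 0 < r ∧ ∃ n, ball z r ⊆ K n := by
    set C : ℕ → Set X := fun n => K n ∪ (ball x ε)ᶜ with hC
    have hCcl : ∀ n, IsClosed (C n) := fun n => (hKcl n).union isOpen_ball.isClosed_compl
    have hCU : ⋃ n, C n = univ := by
      apply eq_univ_of_forall
      intro y
      by_cases hy : y ∈ ball x ε
      · obtain ⟨n, hn⟩ := mem_iUnion.mp (hball hy)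
        exact mem_iUnion.mpr ⟨n, Or.inl hn⟩
      · exact mem_iUnion.mpr ⟨0, Or.inr hy⟩
    have hdense := dense_iUnion_interior_of_closed hCcl hCU
    obtain ⟨z, hz, hz'⟩ := hdense.exists_mem_open isOpen_ball
      (nonempty_ball.mpr hε)
    obtain ⟨n, hzn⟩ := mem_iUnion.mp hz
    have hopen : IsOpen (interior (C n) ∩ ball x ε) :=
      isOpen_interior.inter isOpen_ball
    obtain ⟨r, hr, hrsub⟩ := Metric.isOpen_iff.mp hopen z ⟨hzn, hz'⟩
    refine ⟨z, r, hr, n, fun w hw => ?_⟩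
    obtain ⟨hw1, hw2⟩ := hrsub hw
    rcases interior_subset hw1 with h | h
    · exact h
    · exact absurd hw2 h
  obtain ⟨n, hn⟩ := hzK
  -- closedBall z (r/2) is weakly compact
  have hsub : closedBall z (r / 2) ⊆ K n :=
    (closedBall_subset_ball (by linarith)).trans hn
  have hwcl : ∀ (c : X) (ρ : ℝ), IsClosed (toWeakSpace ℝ X '' closedBall c ρ) := by
    intro c ρ
    have h1 := (convex_closedBall c ρ).toWeakSpace_closure (𝕜 := ℝ)
    rw [closure_eq_iff_isClosed.mpr isClosed_closedBall] at h1
    exact closure_eq_iff_isClosed.mp h1.symm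
  have hcpt : IsCompact (toWeakSpace ℝ X '' closedBall z (r / 2)) :=
    (hK n).of_isClosed_subset (hwcl z (r / 2)) (Set.image_mono hsub)
  -- translate: closedBall 0 (r/2) weakly compact
  have hcpt0 : IsCompact (toWeakSpace ℝ X '' closedBall (0 : X) (r / 2)) := by
    have hmap : Continuous fun w : WeakSpace ℝ X => w - toWeakSpace ℝ X z :=
      continuous_id.sub continuous_const
    have himg : (fun w : WeakSpace ℝ X => w - toWeakSpace ℝ X z) ''
        (toWeakSpace ℝ X '' closedBall z (r / 2)) =
        toWeakSpace ℝ X '' closedBall (0 : X) (r / 2) := by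
      rw [Set.image_image]
      ext w
      simp only [Set.mem_image]
      constructor
      · rintro ⟨a, ha, rfl⟩
        exact ⟨a - z, by simpa [dist_eq_norm] using mem_closedBall.mp ha, map_sub _ _ _⟩
      · rintro ⟨a, ha, rfl⟩
        refine ⟨a + z, by simpa [dist_eq_norm] using mem_closedBall.mp ha, ?_⟩
        rw [map_add]; abel
    rw [← himg]
    exact hcpt.image hmap
  -- scale: closedBall 0 1 weakly compact
  have hscale : toWeakSpace ℝ X '' closedBall (0 : X) 1 =
      WeakSpace.map ((2 / r) • (ContinuousLinearMap.id ℝ X)) ''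
        (toWeakSpace ℝ X '' closedBall (0 : X) (r / 2)) := by
    rw [Set.image_image]
    ext w
    simp only [Set.mem_image]
    constructor
    · rintro ⟨a, ha, rfl⟩
      refine ⟨(r / 2) • a, ?_, ?_⟩
      · simp only [mem_closedBall, dist_zero_right, norm_smul] at ha ⊢
        rw [Real.norm_eq_abs, abs_of_pos (by linarith)]
        nlinarith [norm_nonneg a]
      · change ((2 / r) • ContinuousLinearMap.id ℝ X) ((r / 2) • a) = a
        simp only [ContinuousLinearMap.smul_apply, ContinuousLinearMap.id_apply]
        show (2 / r) • ((r / 2) • a) = a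
        rw [smul_smul, show (2 / r) * (r / 2) = 1 by field_simp, one_smul]
    · rintro ⟨a, ha, rfl⟩
      refine ⟨(2 / r) • a, ?_, ?_⟩
      · simp only [mem_closedBall, dist_zero_right, norm_smul] at ha ⊢
        rw [Real.norm_eq_abs, abs_of_pos (by positivity)]
        rw [div_mul_eq_mul_div, div_le_one hr]
        linarith
      · change (2 / r) • a = ((2 / r) • ContinuousLinearMap.id ℝ X) a
        simp [map_smul]
  rw [hscale]
  exact hcpt0.image (WeakSpace.map _).continuous
end
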